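/- If A∪B belongs to the backbone 𝓑, then Z_A + Z_B ≥ Z_{A∪B} + Z_{A∩B} − 1, where Z_S = #{i ∈ [k] : S ∩ S_i = ∅}. -/

import Mathlib

theorem stmt_8 {α : Type*} [Fintype α] [DecidableEq α] (k : ℕ)
    (S : Fin k → Finset α)
    (hdisj : ∀ i j, i ≠ j → Disjoint (S i) (S j))
    (hcover : Finset.univ.biUnion S = Finset.univ)
    (A B : Finset α)
    (hAB : (Finset.univ.filter (fun i => 2 ≤ ((A ∪ B) ∩ S i).card)).card ≤ 1) :
    ((Finset.univ.filter (fun i => A ∩ S i = ∅)).card : ℤ)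
      + ((Finset.univ.filter (fun i => B ∩ S i = ∅)).card : ℤ)
    ≥ ((Finset.univ.filter (fun i => (A ∪ B) ∩ S i = ∅)).card : ℤ)
      + ((Finset.univ.filter (fun i => (A ∩ B) ∩ S i = ∅)).card : ℤ) - 1 := by
  classical
  set Fa := Finset.univ.filter (fun i => A ∩ S i = ∅) with hFa
  set Fb := Finset.univ.filter (fun i => B ∩ S i = ∅) with hFb
  set Fbad := Finset.univ.filter (fun i => 2 ≤ ((A ∪ B) ∩ S i).card) with hFbad
  have hu : Finset.univ.filter (fun i => (A ∪ B) ∩ S i = ∅) = Fa ∩ Fb := by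
    ext i
    simp [hFa, hFb, Finset.union_inter_distrib_right, Finset.union_eq_empty]
  have hn : Finset.univ.filter (fun i => (A ∩ B) ∩ S i = ∅) ⊆ (Fa ∪ Fb) ∪ Fbad := by
    intro i hi
    simp only [Finset.mem_filter, Finset.mem_univ, true_and] at hi
    simp only [Finset.mem_union, hFa, hFb, hFbad, Finset.mem_filter, Finset.mem_univ,
      true_and]
    by_contra h
    push_neg at h
    obtain ⟨⟨ha, hb⟩, hc⟩ := h
    obtain ⟨x, hx⟩ := ha
    obtain ⟨y, hy⟩ := hb
    simp only [Finset.mem_inter] at hx hy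
    have hxy : x ≠ y := by
      rintro rfl
      have : x ∈ (A ∩ B) ∩ S i := by
        simp [Finset.mem_inter, hx.1, hy.1, hx.2]
      simp [hi] at this
    have hsub : ({x, y} : Finset α) ⊆ (A ∪ B) ∩ S i := by
      intro z hz
      simp only [Finset.mem_insert, Finset.mem_singleton] at hz
      rcases hz with rfl | rfl
      · simp [Finset.mem_inter, Finset.mem_union, hx.1, hx.2]
      · simp [Finset.mem_inter, Finset.mem_union, hy.1, hy.2]
    have : 2 ≤ ((A ∪ B) ∩ S i).card := by
      calc 2 = ({x, y} : Finset α).card := by rw [Finset.card_insert_of_notMem (by simp [hxy]), Finset.card_singleton]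
        _ ≤ _ := Finset.card_le_card hsub
    omega
  have h1 : (Finset.univ.filter (fun i => (A ∩ B) ∩ S i = ∅)).card
      ≤ (Fa ∪ Fb).card + Fbad.card :=
    le_trans (Finset.card_le_card hn) (Finset.card_union_le _ _)
  have h2 : (Fa ∩ Fb).card + (Fa ∪ Fb).card = Fa.card + Fb.card :=
    Finset.card_inter_add_card_union Fa Fb
  rw [hu]
  push_cast
  omega
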